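/- Let a be an aperiodic cycle of length r > 1. For a positive part p of a (a maximal cyclic run of entries ≥ 0, or the whole cycle if all entries are ≥ 0), define θ(p) = l(p) if p consists of a single bloc of zeroes or l(p) = r, and θ(p) = 1 + l(p) otherwise. Define ε*(b) = ε(b) for each positive bloc b, except ε*(b) = 0 when b is a locally maximal bloc with entry 0. Then θ(p) = l(p) + Σ_{b ⊆ p} ε*(b), the sum over blocs contained in p. -/

import Mathlib

/-- A function `a : ℤ → ℤ` has period `r`. -/
def CyclePeriodic (a : ℤ → ℤ) (r : ℤ) : Prop := ∀ i, a (i + r) = a i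

/-- `a` is an aperiodic cycle of length `r`: it has period `r` and no smaller
positive period. -/
def CycleAperiodic (a : ℤ → ℤ) (r : ℤ) : Prop :=
  CyclePeriodic a r ∧ ∀ d : ℤ, 0 < d → d < r → ¬ CyclePeriodic a d

/-- `i` is the first index of a bloc (a maximal run of equal consecutive entries). -/
def blocStart (a : ℤ → ℤ) (i : ℤ) : Prop := a (i - 1) ≠ a i

instance (a : ℤ → ℤ) (i : ℤ) : Decidable (blocStart a i) :=
  inferInstanceAs (Decidable (_ ≠ _))

/-- The length of the bloc starting at `i`. -/
noncomputable def blocLen (a : ℤ → ℤ) (i : ℤ) : ℤ :=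
  sInf {l : ℤ | 0 < l ∧ a (i + l) ≠ a i}

/-- `ε` of the bloc starting at `i`: `1` if locally maximal (both neighbouring
blocs have strictly smaller entries), `-1` if locally minimal, `0` otherwise. -/
noncomputable def blocEps (a : ℤ → ℤ) (i : ℤ) : ℤ :=
  if a (i - 1) < a i ∧ a (i + blocLen a i) < a i then 1
  else if a i < a (i - 1) ∧ a i < a (i + blocLen a i) then -1
  else 0

/-- `ε*` of the bloc starting at `i`: equal to `ε`, except it is `0` for a
locally maximal bloc with entry `0`. -/
noncomputable def blocEpsStar (a : ℤ → ℤ) (i : ℤ) : ℤ :=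
  if a i = 0 ∧ blocEps a i = 1 then 0 else blocEps a i

/-- `i` is the first index of a positive part (a maximal run of entries `≥ 0`). -/
def partStart (a : ℤ → ℤ) (i : ℤ) : Prop := 0 ≤ a i ∧ a (i - 1) < 0

instance (a : ℤ → ℤ) (i : ℤ) : Decidable (partStart a i) :=
  inferInstanceAs (Decidable (_ ∧ _))

/-- The length of the positive part starting at `i`. -/
noncomputable def partLen (a : ℤ → ℤ) (i : ℤ) : ℤ :=
  sInf {l : ℤ | 0 < l ∧ a (i + l) < 0}

/-- `θ(p)` for the positive part `p` starting at `i`: `l(p)` if `p` is a single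
bloc of zeroes, and `1 + l(p)` otherwise.  (The case `l(p) = r` does not occur
for a part with a genuine start.) -/
noncomputable def thetaP (a : ℤ → ℤ) (i : ℤ) : ℤ :=
  if ∀ k ∈ Finset.Ico i (i + partLen a i), a k = 0 then partLen a i
  else partLen a i + 1

/-- `θ(a) = Σ θ(p)` over the positive parts of `a`, computed from the window
`[t, t+r)`; when all entries are `≥ 0` the whole cycle is a single positive
part `p` with `θ(p) = l(p) = r`. -/
noncomputable def thetaSum (a : ℤ → ℤ) (r t : ℤ) : ℤ :=
  if ∀ j ∈ Finset.Ico t (t + r), 0 ≤ a j then r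
  else ∑ i ∈ Finset.Ico t (t + r), if partStart a i then thetaP a i else 0

/-- `γ₁(a)` : the number of entries of `a` that are `≥ 0`. -/
noncomputable def gammaOne (a : ℤ → ℤ) (r t : ℤ) : ℤ :=
  ∑ i ∈ Finset.Ico t (t + r), if 0 ≤ a i then 1 else 0

/-- `γ₂(a) = Σ max(aᵢ, 0)`. -/
noncomputable def gammaTwo (a : ℤ → ℤ) (r t : ℤ) : ℤ :=
  ∑ i ∈ Finset.Ico t (t + r), max (a i) 0

/-- `γ₃(a) = Σ ε*(b)` over the positive blocs of `a`. -/
noncomputable def gammaThree (a : ℤ → ℤ) (r t : ℤ) : ℤ :=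
  ∑ i ∈ Finset.Ico t (t + r),
    if blocStart a i ∧ 0 ≤ a i then blocEpsStar a i else 0

section ThetaPAux

private lemma per_mul' {f : ℤ → ℤ} {r : ℤ} (h : ∀ x, f (x + r) = f x) (k m : ℤ) :
    f (m + k * r) = f m := by
  induction k using Int.induction_on with
  | zero => simp
  | succ n ih =>
      have e : m + ((n : ℤ) + 1) * r = (m + (n : ℤ) * r) + r := by ring
      rw [e, h, ih]
  | pred n ih =>
      have e : (m + (-(n : ℤ) - 1) * r) + r = m + (-(n : ℤ)) * r := by ring
      calc f (m + (-(n : ℤ) - 1) * r) = f ((m + (-(n : ℤ) - 1) * r) + r) := (h _).symm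
        _ = f (m + (-(n : ℤ)) * r) := by rw [e]
        _ = f m := ih

private lemma sum_Ico_consec' (f : ℤ → ℤ) {m n k : ℤ} (h1 : m ≤ n) (h2 : n ≤ k) :
    ((∑ i ∈ Finset.Ico m n, f i) + ∑ i ∈ Finset.Ico n k, f i) = ∑ i ∈ Finset.Ico m k, f i := by
  rw [← Finset.sum_union (Finset.Ico_disjoint_Ico_consecutive m n k),
    Finset.Ico_union_Ico_eq_Ico h1 h2]

private lemma sum_shift' {r : ℤ} (hr : 0 < r) (f : ℤ → ℤ) (hf : ∀ x, f (x + r) = f x)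
    (t s : ℤ) : ∑ k ∈ Finset.Ico t (t + r), f k = ∑ k ∈ Finset.Ico s (s + r), f k := by
  refine Finset.sum_nbij' (fun k => s + (k - s) % r) (fun k => t + (k - t) % r)
    ?_ ?_ ?_ ?_ ?_
  · intro k _
    have h1 : 0 ≤ (k - s) % r := Int.emod_nonneg _ hr.ne'
    have h2 : (k - s) % r < r := Int.emod_lt_of_pos _ hr
    simp only [Finset.mem_Ico]; omega
  · intro k _
    have h1 : 0 ≤ (k - t) % r := Int.emod_nonneg _ hr.ne'
    have h2 : (k - t) % r < r := Int.emod_lt_of_pos _ hr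
    simp only [Finset.mem_Ico]; omega
  · intro k hk
    simp only [Finset.mem_Ico] at hk
    show t + (s + (k - s) % r - t) % r = k
    have h1 : s + (k - s) % r - t = (k - t) + (-((k - s) / r)) * r := by
      rw [Int.emod_def]; ring
    rw [h1, Int.add_mul_emod_self_right, Int.emod_eq_of_lt (by omega) (by omega)]
    ring
  · intro k hk
    simp only [Finset.mem_Ico] at hk
    show s + (t + (k - t) % r - s) % r = k
    have h1 : t + (k - t) % r - s = (k - s) + (-((k - t) / r)) * r := by
      rw [Int.emod_def]; ring
    rw [h1, Int.add_mul_emod_self_right, Int.emod_eq_of_lt (by omega) (by omega)]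
    ring
  · intro k _
    show f k = f (s + (k - s) % r)
    have h1 : s + (k - s) % r = k + (-((k - s) / r)) * r := by
      rw [Int.emod_def]; ring
    rw [h1, per_mul' hf]

private lemma blocLen_spec' (a : ℤ → ℤ) (hB : ∀ m : ℤ, ∃ l, 0 < l ∧ a (m + l) ≠ a m)
    (i : ℤ) : 0 < blocLen a i ∧ a (i + blocLen a i) ≠ a i :=
  Int.csInf_mem (hB i) ⟨1, fun l hl => by have := hl.1; omega⟩

private lemma blocLen_min' (a : ℤ → ℤ) (i l : ℤ) (h0 : 0 ≤ l) (hl : l < blocLen a i) :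
    a (i + l) = a i := by
  rcases eq_or_lt_of_le h0 with h | h
  · rw [← h]; simp
  · by_contra hne
    have : blocLen a i ≤ l :=
      csInf_le ⟨1, fun x hx => by have := hx.1; omega⟩ ⟨h, hne⟩
    omega

private lemma eps_eq' (a : ℤ → ℤ) (hB : ∀ m : ℤ, ∃ l, 0 < l ∧ a (m + l) ≠ a m)
    (i : ℤ) (hi : blocStart a i) :
    blocEps a i = (if a (i + blocLen a i) < a i then 1 else 0)
      - (if a i < a (i - 1) then 1 else 0) := by
  have h2 := (blocLen_spec' a hB i).2
  unfold blocStart at hi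
  unfold blocEps
  rcases hi.lt_or_gt with h | h <;> rcases h2.lt_or_gt with g | g <;>
    split_ifs <;> omega

private lemma eps_one' (a : ℤ → ℤ) (k : ℤ) (h : blocEps a k = 1) :
    a (k - 1) < a k ∧ a (k + blocLen a k) < a k := by
  unfold blocEps at h
  split_ifs at h with h1 h2 <;> omega

private lemma key' (a : ℤ → ℤ) (hB : ∀ m : ℤ, ∃ l, 0 < l ∧ a (m + l) ≠ a m) (n : ℕ) :
    ∀ t : ℤ, blocStart a t → blocStart a (t + (n : ℤ)) →
      (∑ k ∈ Finset.Ico t (t + (n : ℤ)), if blocStart a k then blocEps a k else 0)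
        = (if a (t + (n : ℤ)) < a (t + (n : ℤ) - 1) then 1 else 0)
          - (if a t < a (t - 1) then 1 else 0) := by
  induction n using Nat.strong_induction_on with
  | _ n ih =>
    intro t ht htn
    rcases Nat.eq_zero_or_pos n with rfl | hpos
    · simp
    · obtain ⟨hL0, hLne⟩ := blocLen_spec' a hB t
      set L := blocLen a t with hLdef
      have hmin : ∀ l : ℤ, 0 ≤ l → l < L → a (t + l) = a t := fun l h1 h2 =>
        blocLen_min' a t l h1 h2
      have hLn : L ≤ (n : ℤ) := by
        by_contra hc
        push_neg at hc
        have h1 : a (t + (n : ℤ)) = a t := hmin n (by positivity) hc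
        have h2 : a (t + (n : ℤ) - 1) = a t := by
          have := hmin ((n : ℤ) - 1) (by omega) (by omega)
          rwa [show t + ((n : ℤ) - 1) = t + (n : ℤ) - 1 from by ring] at this
        exact htn (by rw [h1, h2])
      have hL1 : a (t + L - 1) = a t := by
        have := hmin (L - 1) (by omega) (by omega)
        rwa [show t + (L - 1) = t + L - 1 from by ring] at this
      have htL : blocStart a (t + L) := by
        unfold blocStart; rw [hL1]; exact Ne.symm hLne
      have hsum1 : (∑ k ∈ Finset.Ico t (t + L),
          if blocStart a k then blocEps a k else 0) = blocEps a t := by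
        rw [Finset.sum_eq_single_of_mem t (by simp only [Finset.mem_Ico]; omega)
          (fun k hk hkt => ?_), if_pos ht]
        simp only [Finset.mem_Ico] at hk
        have e1 : a (k - 1) = a t := by
          have := hmin (k - 1 - t) (by omega) (by omega)
          rwa [show t + (k - 1 - t) = k - 1 from by ring] at this
        have e2 : a k = a t := by
          have := hmin (k - t) (by omega) (by omega)
          rwa [show t + (k - t) = k from by ring] at this
        have : ¬ blocStart a k := by unfold blocStart; rw [e1, e2]; simp
        rw [if_neg this]
      have hcast : ((n - L.toNat : ℕ) : ℤ) = (n : ℤ) - L := by omega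
      have hlt : n - L.toNat < n := by omega
      have hidx : t + L + ((n - L.toNat : ℕ) : ℤ) = t + (n : ℤ) := by omega
      have hih := ih (n - L.toNat) hlt (t + L) htL (by rw [hidx]; exact htn)
      rw [hidx] at hih
      rw [← sum_Ico_consec' _ (by omega : t ≤ t + L) (by omega : t + L ≤ t + (n : ℤ)),
        hsum1, hih, eps_eq' a hB t ht, ← hLdef, hL1]
      ring
  end ThetaPAux


/-- For a positive part `p` of an aperiodic cycle of length `r > 1`,
`θ(p) = l(p) + Σ_{b ⊆ p} ε*(b)`.  The first clause treats a part with a genuine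
start (some entry of the cycle is negative); the second treats the case where
all entries are `≥ 0`, so the unique positive part is the whole cycle with
`θ(p) = l(p) = r` and the blocs contained in it are all blocs of the cycle. -/
theorem thetaP_eq (a : ℤ → ℤ) (r : ℤ) (hr : 1 < r) (hap : CycleAperiodic a r) :
    (∀ i : ℤ, partStart a i →
      thetaP a i = partLen a i +
        ∑ k ∈ Finset.Ico i (i + partLen a i),
          if blocStart a k then blocEpsStar a k else 0) ∧
    ((∀ j, 0 ≤ a j) → ∀ t : ℤ,
      (r : ℤ) = r + ∑ k ∈ Finset.Ico t (t + r),
          if blocStart a k then blocEpsStar a k else 0) := by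
  obtain ⟨hper, hsmall⟩ := hap
  have hnc : ∃ j : ℤ, a (j - 1) ≠ a j := by
    by_contra h
    push_neg at h
    have h1 : CyclePeriodic a 1 := by
      intro m
      simpa using (h (m + 1)).symm
    exact hsmall 1 one_pos hr h1
  have hB : ∀ m : ℤ, ∃ l, 0 < l ∧ a (m + l) ≠ a m := by
    intro m
    obtain ⟨j, hj⟩ := hnc
    have habs1 : j - m ≤ |j - m| := le_abs_self _
    have habs2 : -(j - m) ≤ |j - m| := neg_le_abs _
    have habs0 : 0 ≤ |j - m| := abs_nonneg _
    have hkr : (|j - m| + 2) * 2 ≤ (|j - m| + 2) * r := by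
      apply mul_le_mul_of_nonneg_left (by omega) (by omega)
    have e1 : a (m + (j - m + (|j - m| + 2) * r)) = a j := by
      rw [show m + (j - m + (|j - m| + 2) * r) = j + (|j - m| + 2) * r from by ring,
        per_mul' hper]
    have e2 : a (m + (j - 1 - m + (|j - m| + 2) * r)) = a (j - 1) := by
      rw [show m + (j - 1 - m + (|j - m| + 2) * r) = (j - 1) + (|j - m| + 2) * r from by ring,
        per_mul' hper]
    by_cases h : a j = a m
    · exact ⟨j - 1 - m + (|j - m| + 2) * r, by linarith, by rw [e2, ← h]; exact hj⟩
    · exact ⟨j - m + (|j - m| + 2) * r, by linarith, by rw [e1]; exact h⟩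
  constructor
  · intro i hi
    obtain ⟨hi0, hi1⟩ := hi
    have hPne : ({l : ℤ | 0 < l ∧ a (i + l) < 0} : Set ℤ).Nonempty := by
      refine ⟨r - 1, by omega, ?_⟩
      rw [show i + (r - 1) = (i - 1) + r from by ring, hper (i - 1)]
      exact hi1
    have hPL : 0 < partLen a i ∧ a (i + partLen a i) < 0 :=
      Int.csInf_mem hPne ⟨1, fun l hl => by have := hl.1; omega⟩
    set L := partLen a i with hLdef
    obtain ⟨hL0, hLneg⟩ := hPL
    have hPmin : ∀ l : ℤ, 0 ≤ l → l < L → 0 ≤ a (i + l) := by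
      intro l h0 hl
      rcases eq_or_lt_of_le h0 with h | h
      · rw [← h]; simpa using hi0
      · by_contra hc
        push_neg at hc
        have : L ≤ l := csInf_le ⟨1, fun x hx => by have := hx.1; omega⟩ ⟨h, hc⟩
        omega
    have hP' : ∀ k ∈ Finset.Ico i (i + L), 0 ≤ a k := by
      intro k hk
      simp only [Finset.mem_Ico] at hk
      have := hPmin (k - i) (by omega) (by omega)
      rwa [show i + (k - i) = k from by ring] at this
    have hbi : blocStart a i := by unfold blocStart; omega
    have haL1 : 0 ≤ a (i + L - 1) := by
      have := hPmin (L - 1) (by omega) (by omega)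
      rwa [show i + (L - 1) = i + L - 1 from by ring] at this
    have hbiL : blocStart a (i + L) := by unfold blocStart; omega
    have hLnat : ((L.toNat : ℕ) : ℤ) = L := by omega
    have hkey := key' a hB L.toNat i hbi (by rw [hLnat]; exact hbiL)
    rw [hLnat] at hkey
    have c1 : a (i + L) < a (i + L - 1) := by omega
    have c2 : ¬ a i < a (i - 1) := by omega
    rw [if_pos c1, if_neg c2, sub_zero] at hkey
    have hallzero : ∀ k ∈ Finset.Ico i (i + L), blocStart a k → a k = 0 → blocEps a k = 1 →
        ∀ k' ∈ Finset.Ico i (i + L), a k' = 0 := by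
      intro k hk hbs h0 h1
      obtain ⟨hlm, hrm⟩ := eps_one' a k h1
      simp only [Finset.mem_Ico] at hk
      have hki : k = i := by
        by_contra hne
        have hm : k - 1 ∈ Finset.Ico i (i + L) := by simp only [Finset.mem_Ico]; omega
        have := hP' (k - 1) hm
        omega
      subst hki
      have hM := (blocLen_spec' a hB k).1
      have hLM : L ≤ blocLen a k := by
        by_contra hc
        push_neg at hc
        have hm : k + blocLen a k ∈ Finset.Ico k (k + L) := by
          simp only [Finset.mem_Ico]; omega
        have := hP' _ hm
        omega
      intro k' hk'
      simp only [Finset.mem_Ico] at hk'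
      have := blocLen_min' a k (k' - k) (by omega) (by omega)
      rw [show k + (k' - k) = k' from by ring] at this
      omega
    unfold thetaP
    rw [← hLdef]
    by_cases hz : ∀ k ∈ Finset.Ico i (i + L), a k = 0
    · rw [if_pos hz]
      have hMspec := blocLen_spec' a hB i
      have e0 : a i = 0 := hz i (by simp only [Finset.mem_Ico]; omega)
      have hMeq : blocLen a i = L := by
        have h1 : L ≤ blocLen a i := by
          by_contra hc
          push_neg at hc
          have hm : i + blocLen a i ∈ Finset.Ico i (i + L) := by
            simp only [Finset.mem_Ico]; omega
          exact hMspec.2 (by rw [hz _ hm, e0])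
        have h2 : blocLen a i ≤ L := by
          by_contra hc
          push_neg at hc
          have := blocLen_min' a i L hL0.le hc
          omega
        omega
      have heps : blocEps a i = 1 := by
        unfold blocEps
        rw [hMeq, e0, if_pos ⟨by omega, by omega⟩]
      have hz' : ∀ k ∈ Finset.Ico i (i + L), k ≠ i →
          (if blocStart a k then blocEpsStar a k else 0) = 0 := by
        intro k hk hkt
        simp only [Finset.mem_Ico] at hk
        have e1 : a (k - 1) = 0 := hz (k - 1) (by simp only [Finset.mem_Ico]; omega)
        have e2 : a k = 0 := hz k (by simp only [Finset.mem_Ico]; omega)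
        have : ¬ blocStart a k := by unfold blocStart; rw [e1, e2]; simp
        rw [if_neg this]
      rw [Finset.sum_eq_single_of_mem i (by simp only [Finset.mem_Ico]; omega) hz',
        if_pos hbi]
      unfold blocEpsStar
      rw [if_pos ⟨e0, heps⟩]
      omega
    · rw [if_neg hz]
      have hcong : ∀ k ∈ Finset.Ico i (i + L),
          (if blocStart a k then blocEpsStar a k else 0)
            = (if blocStart a k then blocEps a k else 0) := by
        intro k hk
        by_cases hbs : blocStart a k
        · rw [if_pos hbs, if_pos hbs]
          unfold blocEpsStar
          split_ifs with hc
          · exact absurd (hallzero k hk hbs hc.1 hc.2) hz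
          · rfl
        · rw [if_neg hbs, if_neg hbs]
      rw [Finset.sum_congr rfl hcong, hkey]
  · intro hpos t
    obtain ⟨j, hj⟩ := hnc
    have hbsper : ∀ k : ℤ, blocStart a (k + r) ↔ blocStart a k := by
      intro k
      unfold blocStart
      rw [show k + r - 1 = (k - 1) + r from by ring, hper (k - 1), hper k]
    have hlenper : ∀ k : ℤ, blocLen a (k + r) = blocLen a k := by
      intro k
      unfold blocLen
      congr 1
      ext l
      simp only [Set.mem_setOf_eq]
      rw [show k + r + l = (k + l) + r from by ring, hper (k + l), hper k]
    have hepsper : ∀ k : ℤ, blocEps a (k + r) = blocEps a k := by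
      intro k
      unfold blocEps
      rw [hlenper k, show k + r - 1 = (k - 1) + r from by ring, hper (k - 1), hper k,
        show k + r + blocLen a k = (k + blocLen a k) + r from by ring,
        hper (k + blocLen a k)]
    have hstarper : ∀ k : ℤ, blocEpsStar a (k + r) = blocEpsStar a k := by
      intro k
      unfold blocEpsStar
      rw [hepsper k, hper k]
    have hFper : ∀ k : ℤ, (if blocStart a (k + r) then blocEpsStar a (k + r) else 0)
        = (if blocStart a k then blocEpsStar a k else 0) := by
      intro k
      by_cases h : blocStart a k
      · rw [if_pos ((hbsper k).mpr h), if_pos h, hstarper]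
      · rw [if_neg (fun hh => h ((hbsper k).mp hh)), if_neg h]
    have hshift := sum_shift' (show (0:ℤ) < r by omega)
      (fun k => if blocStart a k then blocEpsStar a k else 0) hFper t j
    have hstar : ∀ k ∈ Finset.Ico j (j + r),
        (if blocStart a k then blocEpsStar a k else 0)
          = (if blocStart a k then blocEps a k else 0) := by
      intro k _
      by_cases hbs : blocStart a k
      · rw [if_pos hbs, if_pos hbs]
        unfold blocEpsStar
        split_ifs with hc
        · exfalso
          have h1 := (eps_one' a k hc.2).1
          have h2 := hpos (k - 1)
          omega
        · rfl
      · rw [if_neg hbs, if_neg hbs]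
    have hbjr : blocStart a (j + r) := by
      unfold blocStart
      rw [show j + r - 1 = (j - 1) + r from by ring, hper (j - 1), hper j]
      exact hj
    have hrnat : ((r.toNat : ℕ) : ℤ) = r := by omega
    have hkey := key' a hB r.toNat j hj (by rw [hrnat]; exact hbjr)
    rw [hrnat] at hkey
    rw [hper j, show j + r - 1 = (j - 1) + r from by ring, hper (j - 1), sub_self] at hkey
    rw [hshift, Finset.sum_congr rfl hstar, hkey]
    omega
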